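/- Let C be a d-clutter on a finite vertex set V such that ⟨C⟩ is d-chorded, and let F ∈ SMS(C^+). Then ⟨C − F⟩ is d-chorded, where C − F = C \ {F} is the clutter obtained from C by removing the circuit F. -/

import Mathlib

namespace ClutterPaper

variable {α : Type*} [DecidableEq α]

/-- `C` is a uniform clutter on vertex set `V` all of whose circuits have cardinality `c`
(i.e. a `(c-1)`-dimensional uniform clutter). -/
def IsClutter (V : Finset α) (c : ℕ) (C : Finset (Finset α)) : Prop :=
  ∀ F ∈ C, F ⊆ V ∧ F.card = c

/-- The complement clutter `C̄`: all `c`-subsets of `V` not in `C`. -/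
def compClutter (V : Finset α) (c : ℕ) (C : Finset (Finset α)) : Finset (Finset α) :=
  V.powersetCard c \ C

/-- `C^∨ = { V \ F | F ∈ C̄ }`. -/
def clutterDual (V : Finset α) (c : ℕ) (C : Finset (Finset α)) : Finset (Finset α) :=
  (compClutter V c C).image fun F => V \ F

/-- `A` is a clique of the clutter `C` (with circuit cardinality `c`) on vertex set `V`:
all `c`-subsets of `A` are circuits. -/
def IsClique (V : Finset α) (c : ℕ) (C : Finset (Finset α)) (A : Finset α) : Prop :=
  A ⊆ V ∧ ∀ F ⊆ A, F.card = c → F ∈ C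

/-- The closed neighborhood `N_C[e] = e ∪ { v ∈ V | e ∪ {v} ∈ C }`. -/
def closedNbhd (V : Finset α) (C : Finset (Finset α)) (e : Finset α) : Finset α :=
  e ∪ V.filter fun v => insert v e ∈ C

/-- `e` is a maximal subcircuit of the clutter `C` with circuit cardinality `c`:
`e` has cardinality `c - 1` and is contained in some circuit. -/
def IsMS (c : ℕ) (C : Finset (Finset α)) (e : Finset α) : Prop :=
  e.card + 1 = c ∧ ∃ F ∈ C, e ⊆ F

/-- `e` is a simplicial maximal subcircuit: a maximal subcircuit whose closed
neighborhood is a clique. -/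
def IsSMS (V : Finset α) (c : ℕ) (C : Finset (Finset α)) (e : Finset α) : Prop :=
  IsMS c C e ∧ IsClique V c C (closedNbhd V C e)

/-- `e` is a free maximal subcircuit: contained in exactly one circuit. -/
def IsFreeMS (c : ℕ) (C : Finset (Finset α)) (e : Finset α) : Prop :=
  e.card + 1 = c ∧ ∃! F, F ∈ C ∧ e ⊆ F

/-- Deletion `C − e` of a maximal subcircuit: the circuits not containing `e`. -/
def delMS (C : Finset (Finset α)) (e : Finset α) : Finset (Finset α) :=
  C.filter fun F => ¬ e ⊆ F

/-- Deletion of a vertex: circuits (or faces) not containing `v`. -/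
def delVert (C : Finset (Finset α)) (v : α) : Finset (Finset α) :=
  C.filter fun F => v ∉ F

/-- Chordality of a uniform clutter (circuit cardinality `c`) on `V`: there is a sequence of
deletions of simplicial maximal subcircuits ending in the clutter with no circuits. -/
inductive Chordal (V : Finset α) (c : ℕ) : Finset (Finset α) → Prop
  | empty : Chordal V c ∅
  | step {C : Finset (Finset α)} (e : Finset α) :
      IsSMS V c C e → Chordal V c (delMS C e) → Chordal V c C

/-- The ascent `C⁺` of a clutter with circuit cardinality `c`: all `(c+1)`-subsets of `V`
that are cliques of `C`. -/
def ascent (V : Finset α) (c : ℕ) (C : Finset (Finset α)) : Finset (Finset α) :=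
  (V.powersetCard (c + 1)).filter fun A => A.powersetCard c ⊆ C

/-- The simplicial complex `⟨D⟩` generated by a clutter `D`: all subsets of its elements. -/
def complexOf (D : Finset (Finset α)) : Finset (Finset α) :=
  D.biUnion Finset.powerset

/-- A family of finsets is a simplicial complex if it is downward closed. -/
def IsComplex (Δ : Finset (Finset α)) : Prop :=
  ∀ F ∈ Δ, ∀ G ⊆ F, G ∈ Δ

/-- The facets (maximal faces) of a simplicial complex. -/
def facets (Δ : Finset (Finset α)) : Finset (Finset α) :=
  Δ.filter fun F => ∀ G ∈ Δ, F ⊆ G → F = G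

/-- `link_Δ(v) = { F \ {v} | v ∈ F ∈ Δ }`. -/
def link (Δ : Finset (Finset α)) (v : α) : Finset (Finset α) :=
  (Δ.filter fun F => v ∈ F).image fun F => F.erase v

/-- `v` is a shedding vertex of `Δ`: no face of `link_Δ(v)` is a facet of `Δ − v`. -/
def Shedding (Δ : Finset (Finset α)) (v : α) : Prop :=
  ∀ F ∈ link Δ v, F ∉ facets (delVert Δ v)

/-- Alexander dual of a simplicial complex on vertex set `V`:
`Δ^∨ = { V \ F | F ⊆ V, F ∉ Δ }`. -/
def alexDual (V : Finset α) (Δ : Finset (Finset α)) : Finset (Finset α) :=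
  (V.powerset.filter fun F => F ∉ Δ).image fun F => V \ F

/-- `Δ` is pure with all facets of cardinality `c` (dimension `c - 1`), and nonempty. -/
def PureDim (Δ : Finset (Finset α)) (c : ℕ) : Prop :=
  Δ.Nonempty ∧ ∀ F ∈ facets Δ, F.card = c

/-- Vertex decomposability of a simplicial complex. -/
inductive VDecomp : Finset (Finset α) → Prop
  | simplex {Δ : Finset (Finset α)} : (facets Δ).card = 1 → VDecomp Δ
  | shed {Δ : Finset (Finset α)} (v : α) : Shedding Δ v →
      VDecomp (link Δ v) → VDecomp (delVert Δ v) → VDecomp Δ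

/-- The vertex set of a clutter (or of the complex it generates). -/
def vertexSet (Ω : Finset (Finset α)) : Finset α :=
  Ω.biUnion id

/-- `Ω` (given by its set of facets, each of cardinality `d+1`) is a `d`-cycle:
nonempty, pure of dimension `d`, `d`-path connected, and every `(d-1)`-dimensional
face lies in an even number of `d`-faces. -/
def IsCycle (d : ℕ) (Ω : Finset (Finset α)) : Prop :=
  Ω.Nonempty ∧ (∀ F ∈ Ω, F.card = d + 1) ∧
    (∀ F ∈ Ω, ∀ G ∈ Ω,
      Relation.ReflTransGen (fun A B => A ∈ Ω ∧ B ∈ Ω ∧ (A ∩ B).card = d) F G) ∧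
    ∀ e : Finset α, e.card = d → Even ((Ω.filter fun F => e ⊆ F).card)

/-- A face-minimal `d`-cycle: no `d`-cycle has a strictly smaller set of `d`-faces. -/
def FaceMinimalCycle (d : ℕ) (Ω : Finset (Finset α)) : Prop :=
  IsCycle d Ω ∧ ∀ Ω' : Finset (Finset α), IsCycle d Ω' → Ω' ⊆ Ω → Ω' = Ω

/-- `Ω` is `d`-complete: it contains every `(d+1)`-subset of its vertex set. -/
def DComplete (d : ℕ) (Ω : Finset (Finset α)) : Prop :=
  ∀ F ⊆ vertexSet Ω, F.card = d + 1 → F ∈ Ω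

/-- The complex `⟨C⟩` generated by the `d`-dimensional clutter `C` is `d`-chorded. -/
def Chorded (d : ℕ) (C : Finset (Finset α)) : Prop :=
  ∀ Ω : Finset (Finset α), FaceMinimalCycle d Ω → Ω ⊆ C → ¬ DComplete d Ω →
    ∃ (k : ℕ) (Ωs : Fin k → Finset (Finset α)), 2 ≤ k ∧
      (∀ i, IsCycle d (Ωs i) ∧ Ωs i ⊆ C) ∧
      (∀ F ∈ Ω, ∃ i, F ∈ Ωs i) ∧
      (∀ F ∈ Ω, Odd ((Finset.univ.filter fun i => F ∈ Ωs i).card)) ∧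
      (∀ F : Finset α, (∃ i, F ∈ Ωs i) → F ∉ Ω →
        Even ((Finset.univ.filter fun i => F ∈ Ωs i).card)) ∧
      ∀ i, vertexSet (Ωs i) ⊂ vertexSet Ω

/-- The circuits of `D` admit an admissible order. -/
def HasAdmissibleOrder (D : Finset (Finset α)) : Prop :=
  ∃ (t : ℕ) (F : Fin t → Finset α), Function.Injective F ∧
    (∀ G, G ∈ D ↔ ∃ i, F i = G) ∧
    ∀ i j : Fin t, j < i →
      ∃ l ∈ F j \ F i, ∃ k : Fin t, k < i ∧ F k \ F i = {l}

/-- Contraction `D/v` of a (not necessarily uniform) clutter: the minimal sets of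
`{ e \ {v} | e ∈ D }`. -/
def contractAux (D : Finset (Finset α)) (v : α) : Finset (Finset α) :=
  D.image fun e => e.erase v

def contract (D : Finset (Finset α)) (v : α) : Finset (Finset α) :=
  (contractAux D v).filter fun e => ∀ f ∈ contractAux D v, f ⊆ e → f = e

/-- `D` has a simplicial vertex (trivially true if `D` has no vertices). -/
def HasSimpVertex (D : Finset (Finset α)) : Prop :=
  vertexSet D = ∅ ∨ ∃ v ∈ vertexSet D, ∀ e₁ ∈ D, ∀ e₂ ∈ D, v ∈ e₁ → v ∈ e₂ →
    ∃ e₃ ∈ D, e₃ ⊆ (e₁ ∪ e₂).erase v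

/-- `D` is W-chordal: every clutter obtained from `D` by a sequence of vertex deletions
and contractions has a simplicial vertex. -/
def WChordal (D : Finset (Finset α)) : Prop :=
  ∀ D' : Finset (Finset α),
    Relation.ReflTransGen (fun X Y => ∃ v, Y = delVert X v ∨ Y = contract X v) D D' →
    HasSimpVertex D'

/-! ### Auxiliary infrastructure -/

lemma mem_vertexSet_iff {X : Finset (Finset α)} {v : α} :
    v ∈ vertexSet X ↔ ∃ G ∈ X, v ∈ G := by
  simp [vertexSet]

lemma subset_vertexSet_of_mem {X : Finset (Finset α)} {G : Finset α} (h : G ∈ X) :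
    G ⊆ vertexSet X := fun v hv => mem_vertexSet_iff.mpr ⟨G, h, hv⟩

lemma vertexSet_mono {X Y : Finset (Finset α)} (h : X ⊆ Y) : vertexSet X ⊆ vertexSet Y :=
  Finset.biUnion_subset_biUnion_of_subset_left _ h

/-- A "partial cycle": pure of dimension `d` with every `(d-1)`-face in an even
number of `d`-faces. -/
def Good (d : ℕ) (X : Finset (Finset α)) : Prop :=
  (∀ G ∈ X, G.card = d + 1) ∧
    ∀ e : Finset α, e.card = d → Even ((X.filter fun G => e ⊆ G).card)

def conn (d : ℕ) (X : Finset (Finset α)) : Finset α → Finset α → Prop :=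
  Relation.ReflTransGen fun A B => A ∈ X ∧ B ∈ X ∧ (A ∩ B).card = d

open Classical in
noncomputable def comp (d : ℕ) (X : Finset (Finset α)) (A : Finset α) : Finset (Finset α) :=
  X.filter fun B => conn d X A B

lemma conn_symm {d : ℕ} {X : Finset (Finset α)} {A B : Finset α}
    (h : conn d X A B) : conn d X B A :=
  haveI : Std.Symm (fun A B : Finset α => A ∈ X ∧ B ∈ X ∧ (A ∩ B).card = d) :=
    ⟨fun _ _ hs => ⟨hs.2.1, hs.1, by rw [Finset.inter_comm]; exact hs.2.2⟩⟩
  Std.Symm.symm (r := Relation.ReflTransGen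
    (fun A B : Finset α => A ∈ X ∧ B ∈ X ∧ (A ∩ B).card = d)) _ _ h

lemma mem_comp {d : ℕ} {X : Finset (Finset α)} {A B : Finset α} :
    B ∈ comp d X A ↔ B ∈ X ∧ conn d X A B := by
  classical
  simp [comp]

lemma comp_subset {d : ℕ} {X : Finset (Finset α)} {A : Finset α} :
    comp d X A ⊆ X := by
  intro B hB; exact (mem_comp.mp hB).1

lemma mem_comp_self {d : ℕ} {X : Finset (Finset α)} {A : Finset α} (h : A ∈ X) :
    A ∈ comp d X A := mem_comp.mpr ⟨h, Relation.ReflTransGen.refl⟩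

lemma comp_eq_of_conn {d : ℕ} {X : Finset (Finset α)} {A B : Finset α}
    (h : conn d X A B) : comp d X A = comp d X B := by
  ext G
  rw [mem_comp, mem_comp]
  exact ⟨fun ⟨h1, h2⟩ => ⟨h1, (conn_symm h).trans h2⟩,
    fun ⟨h1, h2⟩ => ⟨h1, h.trans h2⟩⟩

lemma adj_or_eq {d : ℕ} {X : Finset (Finset α)} (hX : ∀ G ∈ X, G.card = d + 1)
    {A B e : Finset α} (hA : A ∈ X) (hB : B ∈ X) (heA : e ⊆ A) (heB : e ⊆ B)
    (he : e.card = d) : A = B ∨ (A ∩ B).card = d := by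
  have h1 : d ≤ (A ∩ B).card := he ▸ Finset.card_le_card (Finset.subset_inter heA heB)
  have h2 : (A ∩ B).card ≤ d + 1 := (hX A hA) ▸ Finset.card_le_card Finset.inter_subset_left
  rcases Nat.lt_or_ge (A ∩ B).card (d + 1) with hlt | hge
  · right; omega
  · left
    have hAB : A ∩ B = A :=
      Finset.eq_of_subset_of_card_le Finset.inter_subset_left (by rw [hX A hA]; omega)
    have hsub : A ⊆ B := by rw [← hAB]; exact Finset.inter_subset_right
    exact Finset.eq_of_subset_of_card_le hsub (by rw [hX A hA, hX B hB])

lemma comp_filter {d : ℕ} {X : Finset (Finset α)} (hX : ∀ G ∈ X, G.card = d + 1)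
    {A : Finset α} {e : Finset α} (he : e.card = d) :
    (comp d X A).filter (fun G => e ⊆ G) = X.filter (fun G => e ⊆ G) ∨
      (comp d X A).filter (fun G => e ⊆ G) = ∅ := by
  by_cases hex : ∃ B ∈ comp d X A, e ⊆ B
  · left
    obtain ⟨B, hB, heB⟩ := hex
    apply Finset.Subset.antisymm
    · exact Finset.filter_subset_filter _ comp_subset
    · intro G hG
      rw [Finset.mem_filter] at hG ⊢
      obtain ⟨hGX, heG⟩ := hG
      refine ⟨?_, heG⟩
      have hBX := (mem_comp.mp hB).1
      rcases adj_or_eq hX hBX hGX heB heG he with rfl | hadj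
      · exact hB
      · exact mem_comp.mpr ⟨hGX,
          (mem_comp.mp hB).2.tail ⟨hBX, hGX, hadj⟩⟩
  · right
    push_neg at hex
    exact Finset.filter_false_of_mem hex

lemma comp_isCycle {d : ℕ} {X : Finset (Finset α)} (hX : Good d X) {A : Finset α}
    (hA : A ∈ X) : IsCycle d (comp d X A) := by
  refine ⟨⟨A, mem_comp_self hA⟩, fun G hG => hX.1 G (comp_subset hG), ?_, ?_⟩
  · intro G hG H hH
    have hcGH : conn d X G H := (conn_symm (mem_comp.mp hG).2).trans (mem_comp.mp hH).2
    have key : ∀ {P Q : Finset α}, conn d X P Q → P ∈ comp d X A →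
        Relation.ReflTransGen
          (fun A' B' => A' ∈ comp d X A ∧ B' ∈ comp d X A ∧ (A' ∩ B').card = d) P Q := by
      intro P Q hPQ hP
      induction hPQ with
      | refl => exact Relation.ReflTransGen.refl
      | @tail b c hsteps hstep ih =>
        have hb : b ∈ comp d X A := mem_comp.mpr ⟨hstep.1, (mem_comp.mp hP).2.trans hsteps⟩
        have hc : c ∈ comp d X A :=
          mem_comp.mpr ⟨hstep.2.1, (mem_comp.mp hb).2.tail hstep⟩
        exact ih.tail ⟨hb, hc, hstep.2.2⟩
    exact key hcGH hG
  · intro e he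
    rcases comp_filter hX.1 (A := A) he with hcf | hcf
    · rw [hcf]; exact hX.2 e he
    · rw [hcf]; simp

/-! ### Counting infrastructure -/

def cntL (l : List (Finset (Finset α))) (G : Finset α) : ℕ :=
  (l.map fun Z => if G ∈ Z then 1 else 0).sum

@[simp] lemma cntL_nil (G : Finset α) : cntL ([] : List (Finset (Finset α))) G = 0 := rfl

@[simp] lemma cntL_cons (Z : Finset (Finset α)) (l : List (Finset (Finset α))) (G : Finset α) :
    cntL (Z :: l) G = (if G ∈ Z then 1 else 0) + cntL l G := by
  simp [cntL]

@[simp] lemma cntL_append (l₁ l₂ : List (Finset (Finset α))) (G : Finset α) :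
    cntL (l₁ ++ l₂) G = cntL l₁ G + cntL l₂ G := by
  simp [cntL]

lemma cntL_flatMap {ι : Type*} (l : List ι) (R : ι → List (Finset (Finset α))) (G : Finset α) :
    cntL (l.flatMap R) G = (l.map fun i => cntL (R i) G).sum := by
  induction l with
  | nil => rfl
  | cons a t ih => simp [List.flatMap_cons, ih]

lemma cntL_toList (s : Finset (Finset (Finset α))) (G : Finset α) :
    cntL s.toList G = (s.filter fun Z => G ∈ Z).card := by
  simp only [cntL]
  rw [Finset.sum_map_toList, Finset.card_filter]

lemma sum_univ_get {β : Type*} (l : List β) (f : β → ℕ) :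
    ∑ i : Fin l.length, f (l.get i) = (l.map f).sum := by
  induction l with
  | nil => simp
  | cons a t ih =>
    rw [List.map_cons, List.sum_cons, ← ih]
    exact Fin.sum_univ_succ _

lemma card_univ_get (l : List (Finset (Finset α))) (G : Finset α) :
    (Finset.univ.filter fun i : Fin l.length => G ∈ l.get i).card = cntL l G := by
  rw [Finset.card_filter]
  simp only [cntL]
  exact sum_univ_get l (fun Z => if G ∈ Z then 1 else 0)

lemma count_two {s g : Finset α} (hg : g ⊆ s) (hcard : g.card + 2 = s.card) :
    ((s.powersetCard (g.card + 1)).filter fun A => g ⊆ A).card = 2 := by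
  have himg : (s.powersetCard (g.card + 1)).filter (fun A => g ⊆ A)
      = (s \ g).image fun x => insert x g := by
    ext A
    simp only [Finset.mem_filter, Finset.mem_powersetCard, Finset.mem_image, Finset.mem_sdiff]
    constructor
    · rintro ⟨⟨hAs, hAc⟩, hgA⟩
      have h1 : (A \ g).card = 1 := by rw [Finset.card_sdiff_of_subset hgA]; omega
      obtain ⟨x, hx⟩ := Finset.card_eq_one.mp h1
      have hxA : x ∈ A \ g := hx ▸ Finset.mem_singleton_self x
      refine ⟨x, ⟨hAs (Finset.mem_sdiff.mp hxA).1, (Finset.mem_sdiff.mp hxA).2⟩, ?_⟩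
      have hA : g ∪ A \ g = A := Finset.union_sdiff_of_subset hgA
      rw [hx] at hA
      rw [← hA, Finset.union_comm]
      rw [Finset.insert_eq]
    · rintro ⟨x, ⟨hxs, hxg⟩, rfl⟩
      exact ⟨⟨Finset.insert_subset hxs hg, by rw [Finset.card_insert_of_notMem hxg]⟩,
        Finset.subset_insert _ _⟩
  rw [himg, Finset.card_image_of_injOn, Finset.card_sdiff_of_subset hg]
  · omega
  · intro x hx y _ hxy
    have hxm : x ∈ insert y g := by
      rw [show insert y g = insert x g from hxy.symm]
      exact Finset.mem_insert_self x g
    rcases Finset.mem_insert.mp hxm with h | h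
    · exact h
    · exact absurd h (Finset.mem_sdiff.mp hx).2

lemma bdry_filter_card {d : ℕ} {S e : Finset α} (hS : S.card = d + 2) (he : e.card = d) :
    ((S.powersetCard (d + 1)).filter fun G => e ⊆ G).card = if e ⊆ S then 2 else 0 := by
  subst he
  split_ifs with h
  · exact count_two h (by omega)
  · rw [Finset.card_eq_zero]
    apply Finset.filter_false_of_mem
    intro G hG heG
    exact h (heG.trans (Finset.mem_powersetCard.mp hG).1)

lemma bdry_isCycle {d : ℕ} {S : Finset α} (hS : S.card = d + 2) :
    IsCycle d (S.powersetCard (d + 1)) := by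
  refine ⟨?_, fun G hG => (Finset.mem_powersetCard.mp hG).2, ?_, ?_⟩
  · obtain ⟨B, hB, hBc⟩ := Finset.exists_subset_card_eq (show d + 1 ≤ S.card by omega)
    exact ⟨B, Finset.mem_powersetCard.mpr ⟨hB, hBc⟩⟩
  · intro A hA B hB
    rcases eq_or_ne A B with rfl | hne
    · exact Relation.ReflTransGen.refl
    · refine Relation.ReflTransGen.single ⟨hA, hB, ?_⟩
      obtain ⟨hA1, hA2⟩ := Finset.mem_powersetCard.mp hA
      obtain ⟨hB1, hB2⟩ := Finset.mem_powersetCard.mp hB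
      have hu : (A ∪ B).card ≤ d + 2 := hS ▸ Finset.card_le_card (Finset.union_subset hA1 hB1)
      have hiu := Finset.card_inter_add_card_union A B
      have hne' : (A ∩ B).card ≠ d + 1 := by
        intro hc
        apply hne
        have h1 : A ∩ B = A :=
          Finset.eq_of_subset_of_card_le Finset.inter_subset_left (by rw [hA2, hc])
        have h2 : A ⊆ B := by rw [← h1]; exact Finset.inter_subset_right
        exact Finset.eq_of_subset_of_card_le h2 (by rw [hA2, hB2])
      have hub : (A ∩ B).card ≤ d + 1 :=
        hA2 ▸ Finset.card_le_card Finset.inter_subset_left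
      omega
  · intro e he
    rw [bdry_filter_card hS he]
    split_ifs <;> simp

lemma comps_card (d : ℕ) (X : Finset (Finset α)) (G : Finset α) :
    ((X.image fun A => comp d X A).filter fun Z => G ∈ Z).card
      = if G ∈ X then 1 else 0 := by
  split_ifs with hG
  · rw [Finset.card_eq_one]
    refine ⟨comp d X G, ?_⟩
    ext Z
    simp only [Finset.mem_filter, Finset.mem_image, Finset.mem_singleton]
    constructor
    · rintro ⟨⟨A, hA, rfl⟩, hGZ⟩
      exact comp_eq_of_conn (mem_comp.mp hGZ).2
    · rintro rfl
      exact ⟨⟨G, hG, rfl⟩, mem_comp_self hG⟩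
  · rw [Finset.card_eq_zero]
    apply Finset.filter_false_of_mem
    rintro Z hZ hGZ
    obtain ⟨A, _, rfl⟩ := Finset.mem_image.mp hZ
    exact hG (comp_subset hGZ)

lemma mem_ascent {V : Finset α} {d : ℕ} {C : Finset (Finset α)} {A : Finset α} :
    A ∈ ascent V (d + 1) C ↔ A ⊆ V ∧ A.card = d + 2 ∧ ∀ G ⊆ A, G.card = d + 1 → G ∈ C := by
  simp only [ascent, Finset.mem_filter, Finset.mem_powersetCard]
  constructor
  · rintro ⟨⟨h1, h2⟩, h3⟩
    exact ⟨h1, h2, fun G hG hGc => h3 (Finset.mem_powersetCard.mpr ⟨hG, hGc⟩)⟩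
  · rintro ⟨h1, h2, h3⟩
    exact ⟨⟨h1, h2⟩, fun G hG =>
      h3 G (Finset.mem_powersetCard.mp hG).1 (Finset.mem_powersetCard.mp hG).2⟩

lemma vertex_subset_V {V : Finset α} {d : ℕ} {C : Finset (Finset α)}
    (hC : IsClutter V (d + 1) C) {Λ : Finset (Finset α)} (hsub : Λ ⊆ C) :
    vertexSet Λ ⊆ V := by
  intro v hv
  obtain ⟨G, hG, hvG⟩ := mem_vertexSet_iff.mp hv
  exact (hC G (hsub hG)).1 hvG

/-! ### Parity of double-boundary decompositions -/

lemma parityE_half {d : ℕ} {F : Finset α} (hFc : F.card = d + 1) {u v : α}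
    (huv : u ≠ v) (huF : u ∉ F) {G : Finset α}
    (hGc : G.card = d + 1) (hu : u ∈ G) (hv : v ∉ G) :
    ((F.powersetCard d).filter fun e => G ∈ (insert u (insert v e)).powersetCard (d + 1)).card
      = if G ∈ (insert u F).powersetCard (d + 1) then 1 else 0 := by
  have hcongr : (F.powersetCard d).filter
        (fun e => G ∈ (insert u (insert v e)).powersetCard (d + 1))
      = (F.powersetCard d).filter (fun e => e = G.erase u) := by
    apply Finset.filter_congr
    intro e he
    obtain ⟨heF, hec⟩ := Finset.mem_powersetCard.mp he
    rw [Finset.mem_powersetCard]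
    constructor
    · rintro ⟨hsub, -⟩
      have h1 : G.erase u ⊆ e := by
        intro x hx
        have hxG := Finset.mem_of_mem_erase hx
        have hxu := Finset.ne_of_mem_erase hx
        have := hsub hxG
        rcases Finset.mem_insert.mp this with h | h
        · exact absurd h hxu
        · rcases Finset.mem_insert.mp h with h' | h'
          · exact absurd (h' ▸ hxG) hv
          · exact h'
      have : G.erase u = e := Finset.eq_of_subset_of_card_le h1
        (by rw [Finset.card_erase_of_mem hu, hGc, hec]; omega)
      exact this.symm
    · rintro rfl
      refine ⟨?_, hGc⟩
      intro x hxG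
      rcases eq_or_ne x u with rfl | hxu
      · exact Finset.mem_insert_self _ _
      · exact Finset.mem_insert_of_mem (Finset.mem_insert_of_mem
          (Finset.mem_erase.mpr ⟨hxu, hxG⟩))
  rw [hcongr, Finset.filter_eq']
  have hmem : G.erase u ∈ F.powersetCard d ↔ G ∈ (insert u F).powersetCard (d + 1) := by
    rw [Finset.mem_powersetCard, Finset.mem_powersetCard]
    constructor
    · rintro ⟨h1, -⟩
      exact ⟨Finset.subset_insert_iff.mpr h1, hGc⟩
    · rintro ⟨h1, -⟩
      exact ⟨Finset.subset_insert_iff.mp h1, by rw [Finset.card_erase_of_mem hu, hGc]; omega⟩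
  by_cases hG : G ∈ (insert u F).powersetCard (d + 1)
  · rw [if_pos (hmem.mpr hG), if_pos hG, Finset.card_singleton]
  · rw [if_neg (fun hc => hG (hmem.mp hc)), if_neg hG, Finset.card_empty]

lemma parityE {d : ℕ} {F : Finset α} (hFc : F.card = d + 1) {u v : α}
    (huv : u ≠ v) (huF : u ∉ F) (hvF : v ∉ F) (G : Finset α) :
    (((F.powersetCard d).filter fun e =>
        G ∈ (insert u (insert v e)).powersetCard (d + 1)).card) % 2
      = ((if G ∈ (insert u F).powersetCard (d + 1) then 1 else 0)
        + (if G ∈ (insert v F).powersetCard (d + 1) then 1 else 0)) % 2 := by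
  by_cases hGc : G.card = d + 1
  · by_cases hu : u ∈ G <;> by_cases hv : v ∈ G
    · -- both in G
      have hd2 : 2 ≤ d + 1 := by
        have hsub : ({u, v} : Finset α) ⊆ G := by
          intro x hx
          rcases Finset.mem_insert.mp hx with rfl | hx'
          · exact hu
          · exact (Finset.mem_singleton.mp hx') ▸ hv
        have : ({u, v} : Finset α).card = 2 := by
          rw [Finset.card_insert_of_notMem (by simpa using huv), Finset.card_singleton]
        calc 2 = ({u, v} : Finset α).card := this.symm
          _ ≤ G.card := Finset.card_le_card hsub
          _ = d + 1 := hGc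
      set g : Finset α := G \ {u, v} with hgdef
      have hgc : g.card = d - 1 := by
        rw [hgdef, Finset.card_sdiff_of_subset (by
          intro x hx
          rcases Finset.mem_insert.mp hx with rfl | hx'
          · exact hu
          · exact (Finset.mem_singleton.mp hx') ▸ hv)]
        rw [hGc]
        rw [Finset.card_insert_of_notMem (by simpa using huv), Finset.card_singleton]
        omega
      have hcongr : (F.powersetCard d).filter
            (fun e => G ∈ (insert u (insert v e)).powersetCard (d + 1))
          = (F.powersetCard d).filter (fun e => g ⊆ e) := by
        apply Finset.filter_congr
        intro e he
        obtain ⟨heF, hec⟩ := Finset.mem_powersetCard.mp he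
        rw [Finset.mem_powersetCard]
        constructor
        · rintro ⟨hsub, -⟩
          intro x hx
          obtain ⟨hxG, hxuv⟩ := Finset.mem_sdiff.mp hx
          have := hsub hxG
          rcases Finset.mem_insert.mp this with rfl | h
          · exact absurd (Finset.mem_insert_self _ _) hxuv
          · rcases Finset.mem_insert.mp h with rfl | h'
            · exact absurd (Finset.mem_insert_of_mem (Finset.mem_singleton_self _)) hxuv
            · exact h'
        · intro hge
          refine ⟨?_, hGc⟩
          intro x hxG
          by_cases hxu : x = u
          · exact hxu ▸ Finset.mem_insert_self _ _
          · by_cases hxv : x = v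
            · exact Finset.mem_insert_of_mem (hxv ▸ Finset.mem_insert_self _ _)
            · refine Finset.mem_insert_of_mem (Finset.mem_insert_of_mem ?_)
              exact hge (Finset.mem_sdiff.mpr ⟨hxG, by simp [hxu, hxv]⟩)
      rw [hcongr]
      have hrhs1 : G ∉ (insert u F).powersetCard (d + 1) := by
        rw [Finset.mem_powersetCard]
        rintro ⟨hsub, -⟩
        rcases Finset.mem_insert.mp (hsub hv) with h | h
        · exact huv h.symm
        · exact hvF h
      have hrhs2 : G ∉ (insert v F).powersetCard (d + 1) := by
        rw [Finset.mem_powersetCard]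
        rintro ⟨hsub, -⟩
        rcases Finset.mem_insert.mp (hsub hu) with h | h
        · exact huv h
        · exact huF h
      rw [if_neg hrhs1, if_neg hrhs2]
      by_cases hgF : g ⊆ F
      · have hcnt : ((F.powersetCard d).filter fun e => g ⊆ e).card = 2 := by
          have hd : d = g.card + 1 := by omega
          have hF2 : g.card + 2 = F.card := by omega
          rw [hd]
          exact count_two hgF hF2
        rw [hcnt]
      · have hcnt : ((F.powersetCard d).filter fun e => g ⊆ e).card = 0 := by
          rw [Finset.card_eq_zero]
          apply Finset.filter_false_of_mem
          intro e he hge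
          exact hgF (hge.trans (Finset.mem_powersetCard.mp he).1)
        rw [hcnt]
    · rw [parityE_half hFc huv huF hGc hu hv]
      have h2 : G ∉ (insert v F).powersetCard (d + 1) := by
        intro hc
        obtain ⟨hsub, -⟩ := Finset.mem_powersetCard.mp hc
        have hGF : G ⊆ F := by
          intro x hx
          rcases Finset.mem_insert.mp (hsub hx) with rfl | hh
          · exact absurd hx hv
          · exact hh
        have : G = F := Finset.eq_of_subset_of_card_le hGF (by omega)
        exact huF (this ▸ hu)
      rw [if_neg h2]
      simp
    · -- v ∈ G, u ∉ G : symmetric case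
      have hswap : (F.powersetCard d).filter
            (fun e => G ∈ (insert u (insert v e)).powersetCard (d + 1))
          = (F.powersetCard d).filter
            (fun e => G ∈ (insert v (insert u e)).powersetCard (d + 1)) :=
        Finset.filter_congr fun e _ => by rw [Finset.insert_comm]
      rw [hswap, parityE_half hFc huv.symm hvF hGc hv hu]
      have h2 : G ∉ (insert u F).powersetCard (d + 1) := by
        intro hc
        obtain ⟨hsub, -⟩ := Finset.mem_powersetCard.mp hc
        have hGF : G ⊆ F := by
          intro x hx
          rcases Finset.mem_insert.mp (hsub hx) with rfl | hh
          · exact absurd hx hu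
          · exact hh
        have : G = F := Finset.eq_of_subset_of_card_le hGF (by omega)
        exact hvF (this ▸ hv)
      rw [if_neg h2]
      simp
    · -- neither
      have hlhs : ((F.powersetCard d).filter fun e =>
          G ∈ (insert u (insert v e)).powersetCard (d + 1)).card = 0 := by
        rw [Finset.card_eq_zero]
        apply Finset.filter_false_of_mem
        intro e he hmem
        obtain ⟨hsub, -⟩ := Finset.mem_powersetCard.mp hmem
        obtain ⟨heF, hec⟩ := Finset.mem_powersetCard.mp he
        have hGe : G ⊆ e := by
          intro x hx
          rcases Finset.mem_insert.mp (hsub hx) with rfl | h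
          · exact absurd hx hu
          · rcases Finset.mem_insert.mp h with rfl | h'
            · exact absurd hx hv
            · exact h'
        have := Finset.card_le_card hGe
        omega
      rw [hlhs]
      have hiff : ∀ w : α, w ∉ G → (G ∈ (insert w F).powersetCard (d + 1) ↔ G = F) := by
        intro w hw
        rw [Finset.mem_powersetCard]
        constructor
        · rintro ⟨hsub, -⟩
          have hGF : G ⊆ F := by
            intro x hx
            rcases Finset.mem_insert.mp (hsub hx) with rfl | h
            · exact absurd hx hw
            · exact h
          exact Finset.eq_of_subset_of_card_le hGF (by omega)
        · rintro rfl
          exact ⟨Finset.subset_insert _ _, hGc⟩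
      by_cases hGF : G = F
      · rw [if_pos ((hiff u hu).mpr hGF), if_pos ((hiff v hv).mpr hGF)]
      · rw [if_neg (fun hc => hGF ((hiff u hu).mp hc)),
          if_neg (fun hc => hGF ((hiff v hv).mp hc))]
  · -- G has wrong cardinality: everything is zero
    have hlhs : ((F.powersetCard d).filter fun e =>
        G ∈ (insert u (insert v e)).powersetCard (d + 1)).card = 0 := by
      rw [Finset.card_eq_zero]
      apply Finset.filter_false_of_mem
      intro e _ hmem
      exact hGc (Finset.mem_powersetCard.mp hmem).2
    have h1 : G ∉ (insert u F).powersetCard (d + 1) :=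
      fun hc => hGc (Finset.mem_powersetCard.mp hc).2
    have h2 : G ∉ (insert v F).powersetCard (d + 1) :=
      fun hc => hGc (Finset.mem_powersetCard.mp hc).2
    rw [hlhs, if_neg h1, if_neg h2]

/-! ### Key lemma: a cycle through `F` contains a neighbor completing `F` to a clique -/

lemma claimA {V : Finset α} {d : ℕ} {C : Finset (Finset α)} (hC : IsClutter V (d + 1) C)
    (h : Chorded d C) {F : Finset α} (hFc : F.card = d + 1) :
    ∀ n m (Λ : Finset (Finset α)), (vertexSet Λ).card ≤ n → Λ.card ≤ m →
      IsCycle d Λ → Λ ⊆ C → F ∈ Λ →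
      ∃ w, w ∈ vertexSet Λ ∧ w ∉ F ∧ insert w F ∈ ascent V (d + 1) C := by
  intro n
  induction n with
  | zero =>
    intro m Λ hV _ _ _ hFm
    exfalso
    have h1 : F ⊆ vertexSet Λ := subset_vertexSet_of_mem hFm
    have h2 : F.card ≤ 0 := le_trans (Finset.card_le_card h1) hV
    omega
  | succ n ihn =>
    intro m
    induction m with
    | zero =>
      intro Λ _ hm _ _ hFm
      exfalso
      have := Finset.card_pos.mpr ⟨F, hFm⟩
      omega
    | succ m ihm =>
      intro Λ hV hm hcyc hsub hFm
      by_cases hmin : ∀ Ω', IsCycle d Ω' → Ω' ⊆ Λ → Ω' = Λ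
      · by_cases hcomp : DComplete d Λ
        · -- Λ is d-complete; use any vertex outside F
          obtain ⟨f0, hf0⟩ : F.Nonempty := Finset.card_pos.mp (by omega)
          set e := F.erase f0 with hedef
          have hec : e.card = d := by
            rw [hedef, Finset.card_erase_of_mem hf0, hFc]
            omega
          have heF : e ⊆ F := Finset.erase_subset _ _
          have heven := hcyc.2.2.2 e hec
          have hFin : F ∈ Λ.filter fun G => e ⊆ G := Finset.mem_filter.mpr ⟨hFm, heF⟩
          have hother : ∃ G ∈ Λ.filter (fun G => e ⊆ G), G ≠ F := by
            by_contra hcon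
            push_neg at hcon
            have hsingle : Λ.filter (fun G => e ⊆ G) = {F} :=
              Finset.eq_singleton_iff_unique_mem.mpr ⟨hFin, fun G hG => hcon G hG⟩
            rw [hsingle] at heven
            simp at heven
          obtain ⟨G, hGf, hGF⟩ := hother
          have hGΛ := (Finset.mem_filter.mp hGf).1
          have hvex : ∃ v ∈ G, v ∉ F := by
            by_contra hcon
            push_neg at hcon
            exact hGF (Finset.eq_of_subset_of_card_le hcon
              (by rw [hcyc.2.1 G hGΛ, hFc]))
          obtain ⟨v, hvG, hvF⟩ := hvex
          refine ⟨v, mem_vertexSet_iff.mpr ⟨G, hGΛ, hvG⟩, hvF, ?_⟩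
          rw [mem_ascent]
          have hFV : F ⊆ V := (hC F (hsub hFm)).1
          have hvV : v ∈ V := (hC G (hsub hGΛ)).1 hvG
          refine ⟨Finset.insert_subset hvV hFV,
            by rw [Finset.card_insert_of_notMem hvF, hFc], ?_⟩
          intro G' hG' hG'c
          have hsubV : insert v F ⊆ vertexSet Λ :=
            Finset.insert_subset (mem_vertexSet_iff.mpr ⟨G, hGΛ, hvG⟩)
              (subset_vertexSet_of_mem hFm)
          exact hsub (hcomp G' (hG'.trans hsubV) hG'c)
        · -- Λ is face-minimal but not complete: use chordedness
          obtain ⟨k, Ωs, _, hicyc, hcov, _, _, hvss⟩ := h Λ ⟨hcyc, hmin⟩ hsub hcomp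
          obtain ⟨i, hi⟩ := hcov F hFm
          have hcard : (vertexSet (Ωs i)).card ≤ n := by
            have := Finset.card_lt_card (hvss i)
            omega
          obtain ⟨w, hw1, hw2, hw3⟩ :=
            ihn (Ωs i).card (Ωs i) hcard le_rfl (hicyc i).1 (hicyc i).2 hi
          exact ⟨w, (Finset.ssubset_iff_subset_ne.mp (hvss i)).1 hw1, hw2, hw3⟩
      · push_neg at hmin
        obtain ⟨M, hMcyc, hMsub, hMne⟩ := hmin
        by_cases hFM : F ∈ M
        · have hMV : (vertexSet M).card ≤ n + 1 :=
            le_trans (Finset.card_le_card (vertexSet_mono hMsub)) hV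
          have hMm : M.card ≤ m := by
            have := Finset.card_lt_card (Finset.ssubset_iff_subset_ne.mpr ⟨hMsub, hMne⟩)
            omega
          obtain ⟨w, hw1, hw2, hw3⟩ := ihm M hMV hMm hMcyc (hMsub.trans hsub) hFM
          exact ⟨w, vertexSet_mono hMsub hw1, hw2, hw3⟩
        · set X := Λ \ M with hXdef
          have hXsub : X ⊆ Λ := Finset.sdiff_subset
          have hFX : F ∈ X := Finset.mem_sdiff.mpr ⟨hFm, hFM⟩
          have hgood : Good d X := by
            constructor
            · exact fun G hG => hcyc.2.1 G (hXsub hG)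
            · intro e he
              have h1 : X.filter (fun G => e ⊆ G)
                  = Λ.filter (fun G => e ⊆ G) \ M.filter (fun G => e ⊆ G) := by
                ext G
                simp only [hXdef, Finset.mem_filter, Finset.mem_sdiff]
                tauto
              rw [h1, Finset.card_sdiff_of_subset (Finset.filter_subset_filter _ hMsub)]
              have e1 := hcyc.2.2.2 e he
              have e2 := hMcyc.2.2.2 e he
              have hle := Finset.card_le_card
                (Finset.filter_subset_filter (fun G => e ⊆ G) hMsub)
              rw [Nat.even_iff] at e1 e2 ⊢
              omega
          set Z := comp d X F with hZdef
          have hZcyc := comp_isCycle hgood hFX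
          have hZsub : Z ⊆ Λ := Finset.Subset.trans comp_subset hXsub
          have hZV : (vertexSet Z).card ≤ n + 1 :=
            le_trans (Finset.card_le_card (vertexSet_mono hZsub)) hV
          have hZm : Z.card ≤ m := by
            have h1 : Z.card ≤ X.card := Finset.card_le_card comp_subset
            have h2 : X.card = Λ.card - M.card := by
              rw [hXdef]; exact Finset.card_sdiff_of_subset hMsub
            have h3 : 0 < M.card := Finset.card_pos.mpr hMcyc.1
            have h4 : 0 < Λ.card := Finset.card_pos.mpr ⟨F, hFm⟩
            have h5 : M.card ≤ Λ.card := Finset.card_le_card hMsub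
            omega
          obtain ⟨w, hw1, hw2, hw3⟩ :=
            ihm Z hZV hZm hZcyc (hZsub.trans hsub) (mem_comp_self hFX)
          exact ⟨w, vertexSet_mono hZsub hw1, hw2, hw3⟩

lemma subset_ssubset_trans {A B D : Finset α} (h1 : A ⊆ B) (h2 : B ⊂ D) : A ⊂ D := by
  obtain ⟨h2s, h2ne⟩ := Finset.ssubset_iff_subset_ne.mp h2
  rw [Finset.ssubset_iff_subset_ne]
  refine ⟨h1.trans h2s, fun heq => h2ne ?_⟩
  apply Finset.Subset.antisymm h2s
  rw [← heq]
  exact h1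

/-- If `⟨C⟩` is `d`-chorded and `F ∈ SMS(C⁺)`, then `⟨C − F⟩` is `d`-chorded,
where `C − F = C \ {F}`. -/
theorem chorded_del_sms (V : Finset α) (d : ℕ) (C : Finset (Finset α))
    (hC : IsClutter V (d + 1) C) (h : Chorded d C)
    (F : Finset α) (hF : IsSMS V (d + 2) (ascent V (d + 1) C) F) :
    Chorded d (C.erase F) := by
  intro Ω hΩmin hΩsub hΩnc
  have hΩC : Ω ⊆ C := hΩsub.trans (Finset.erase_subset _ _)
  have hFΩ : F ∉ Ω := fun hmem => (Finset.ne_of_mem_erase (hΩsub hmem)) rfl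
  obtain ⟨k0, Ωs0, hk0, hprop, hcov, hodd, heven, hvss⟩ := h Ω hΩmin hΩC hΩnc
  have hFc : F.card = d + 1 := by
    have := hF.1.1
    omega
  by_cases hI : ∃ i, F ∈ Ωs0 i
  swap
  · push_neg at hI
    refine ⟨k0, Ωs0, hk0, fun i => ⟨(hprop i).1, ?_⟩, hcov, hodd, heven, hvss⟩
    rw [Finset.subset_erase]
    exact ⟨(hprop i).2, hI i⟩
  obtain ⟨istar, histar⟩ := hI
  have key : ∀ i, F ∈ Ωs0 i →
      ∃ u, u ∈ vertexSet (Ωs0 i) ∧ u ∉ F ∧ insert u F ∈ ascent V (d + 1) C :=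
    fun i hi => claimA hC h hFc _ _ (Ωs0 i) le_rfl le_rfl (hprop i).1 (hprop i).2 hi
  have key2 : ∀ i : Fin k0, ∃ u : α, F ∈ Ωs0 i →
      u ∈ vertexSet (Ωs0 i) ∧ u ∉ F ∧ insert u F ∈ ascent V (d + 1) C := by
    intro i
    by_cases hi : F ∈ Ωs0 i
    · obtain ⟨u, hu⟩ := key i hi
      exact ⟨u, fun _ => hu⟩
    · obtain ⟨u, _⟩ := key istar histar
      exact ⟨u, fun hcon => absurd hcon hi⟩
  choose w hw using key2
  set SS : α → Finset (Finset α) := fun u => (insert u F).powersetCard (d + 1) with hSSdef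
  set X : Fin k0 → Finset (Finset α) :=
    fun i => (Ωs0 i \ SS (w i)) ∪ (SS (w i) \ Ωs0 i) with hXdef
  set EL : Fin k0 → List (Finset (Finset α)) := fun i =>
    if w i = w istar then []
    else (F.powersetCard d).toList.map
      fun e => (insert (w i) (insert (w istar) e)).powersetCard (d + 1) with hELdef
  set R : Fin k0 → List (Finset (Finset α)) := fun i =>
    if F ∈ Ωs0 i then ((X i).image fun A => comp d (X i) A).toList ++ EL i
    else [Ωs0 i] with hRdef
  set L : List (Finset (Finset α)) := (List.finRange k0).flatMap R with hLdef
  -- basic facts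
  have hSSmem : ∀ u (G : Finset α), G ∈ SS u ↔ G ⊆ insert u F ∧ G.card = d + 1 := by
    intro u G
    simp only [hSSdef]
    exact Finset.mem_powersetCard
  have hFSS : ∀ u, F ∈ SS u := fun u =>
    (hSSmem u F).mpr ⟨Finset.subset_insert _ _, hFc⟩
  have hSSsub : ∀ i, F ∈ Ωs0 i → SS (w i) ⊆ C := by
    intro i hi G hG
    obtain ⟨h1, h2, h3⟩ := mem_ascent.mp (hw i hi).2.2
    exact h3 G ((hSSmem _ G).mp hG).1 ((hSSmem _ G).mp hG).2
  have hSScard : ∀ i, F ∈ Ωs0 i → (insert (w i) F).card = d + 2 := by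
    intro i hi
    rw [Finset.card_insert_of_notMem (hw i hi).2.1, hFc]
  have hSSparity : ∀ i, F ∈ Ωs0 i → ∀ e : Finset α, e.card = d →
      Even (((SS (w i)).filter fun G => e ⊆ G).card) := by
    intro i hi e he
    simp only [hSSdef]
    rw [bdry_filter_card (hSScard i hi) he]
    split_ifs <;> simp
  have hgood : ∀ i, F ∈ Ωs0 i → Good d (X i) := by
    intro i hi
    constructor
    · intro G hG
      simp only [hXdef, Finset.mem_union, Finset.mem_sdiff] at hG
      rcases hG with ⟨hG', -⟩ | ⟨hG', -⟩
      · exact (hprop i).1.2.1 G hG'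
      · exact ((hSSmem _ G).mp hG').2
    · intro e he
      have hsplit : (X i).filter (fun G => e ⊆ G)
          = ((Ωs0 i).filter (fun G => e ⊆ G) \ (SS (w i)).filter (fun G => e ⊆ G))
            ∪ ((SS (w i)).filter (fun G => e ⊆ G) \ (Ωs0 i).filter (fun G => e ⊆ G)) := by
        ext G
        simp only [hXdef, Finset.mem_filter, Finset.mem_union, Finset.mem_sdiff]
        tauto
      rw [hsplit, Finset.card_union_of_disjoint disjoint_sdiff_sdiff]
      have e1 := (hprop i).1.2.2.2 e he
      have e2 := hSSparity i hi e he
      have c1 := Finset.card_sdiff_add_card_inter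
        ((Ωs0 i).filter (fun G => e ⊆ G)) ((SS (w i)).filter (fun G => e ⊆ G))
      have c2 := Finset.card_sdiff_add_card_inter
        ((SS (w i)).filter (fun G => e ⊆ G)) ((Ωs0 i).filter (fun G => e ⊆ G))
      rw [Finset.inter_comm] at c2
      rw [Nat.even_iff] at e1 e2 ⊢
      omega
  have hvsub : ∀ i, F ∈ Ωs0 i → insert (w i) F ⊆ vertexSet (Ωs0 i) := by
    intro i hi
    exact Finset.insert_subset (hw i hi).1 (subset_vertexSet_of_mem hi)
  have hXvert : ∀ i, F ∈ Ωs0 i → vertexSet (X i) ⊆ vertexSet (Ωs0 i) := by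
    intro i hi v hv
    obtain ⟨G, hG, hvG⟩ := mem_vertexSet_iff.mp hv
    simp only [hXdef, Finset.mem_union, Finset.mem_sdiff] at hG
    rcases hG with ⟨hG', -⟩ | ⟨hG', -⟩
    · exact mem_vertexSet_iff.mpr ⟨G, hG', hvG⟩
    · have hGs := ((hSSmem _ G).mp hG').1
      exact (hvsub i hi) (hGs hvG)
  have hXC : ∀ i, F ∈ Ωs0 i → X i ⊆ C.erase F := by
    intro i hi G hG
    simp only [hXdef, Finset.mem_union, Finset.mem_sdiff] at hG
    rw [Finset.mem_erase]
    rcases hG with ⟨hG1, hG2⟩ | ⟨hG1, hG2⟩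
    · exact ⟨fun hc => hG2 (hc ▸ hFSS (w i)), (hprop i).2 hG1⟩
    · exact ⟨fun hc => hG2 (hc ▸ hi), hSSsub i hi hG1⟩
  have hwΩ : ∀ i, F ∈ Ωs0 i → w i ∈ vertexSet Ω := by
    intro i hi
    exact (Finset.ssubset_iff_subset_ne.mp (hvss i)).1 (hw i hi).1
  have hFvΩ : F ⊆ vertexSet Ω := by
    have h1 : F ⊆ vertexSet (Ωs0 istar) := subset_vertexSet_of_mem histar
    exact h1.trans (Finset.ssubset_iff_subset_ne.mp (hvss istar)).1
  have hcard3 : d + 3 ≤ (vertexSet Ω).card := by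
    have h1 : insert (w istar) F ⊆ vertexSet (Ωs0 istar) := hvsub istar histar
    have h2 := Finset.card_le_card h1
    have h3 := Finset.card_lt_card (hvss istar)
    rw [hSScard istar histar] at h2
    omega
  -- the clique property of the neighborhood
  have hclique := hF.2.2
  have hwN : ∀ i, F ∈ Ωs0 i →
      w i ∈ closedNbhd V (ascent V (d + 1) C) F := by
    intro i hi
    apply Finset.mem_union_right
    apply Finset.mem_filter.mpr
    refine ⟨?_, (hw i hi).2.2⟩
    exact vertex_subset_V hC (hprop i).2 (hw i hi).1
  have hFN : F ⊆ closedNbhd V (ascent V (d + 1) C) F := Finset.subset_union_left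
  -- boundary pieces live in C − F and have small vertex set
  have hbdry : ∀ i, F ∈ Ωs0 i → w i ≠ w istar → ∀ e ∈ F.powersetCard d,
      (insert (w i) (insert (w istar) e)).card = d + 2 ∧
      (insert (w i) (insert (w istar) e)).powersetCard (d + 1) ⊆ C.erase F ∧
      insert (w i) (insert (w istar) e) ⊆ vertexSet Ω := by
    intro i hi hne e he
    obtain ⟨heF, hec⟩ := Finset.mem_powersetCard.mp he
    have hwiF := (hw i hi).2.1
    have hwsF := (hw istar histar).2.1
    have hwse : w istar ∉ e := fun hc => hwsF (heF hc)
    have hwie : w i ∉ insert (w istar) e := by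
      rw [Finset.mem_insert]
      rintro (hc | hc)
      · exact hne hc
      · exact hwiF (heF hc)
    have hTcard : (insert (w i) (insert (w istar) e)).card = d + 2 := by
      rw [Finset.card_insert_of_notMem hwie, Finset.card_insert_of_notMem hwse, hec]
    have hTN : insert (w i) (insert (w istar) e)
        ⊆ closedNbhd V (ascent V (d + 1) C) F := by
      apply Finset.insert_subset (hwN i hi)
      apply Finset.insert_subset (hwN istar histar)
      exact heF.trans hFN
    have hTasc := hclique _ hTN hTcard
    obtain ⟨-, -, hTC⟩ := mem_ascent.mp hTasc
    refine ⟨hTcard, ?_, ?_⟩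
    · intro G hG
      obtain ⟨hG1, hG2⟩ := Finset.mem_powersetCard.mp hG
      rw [Finset.mem_erase]
      refine ⟨?_, hTC G hG1 hG2⟩
      intro hGF
      have hfe : ∃ f ∈ F, f ∉ e := by
        by_contra hcon
        push_neg at hcon
        have := Finset.card_le_card hcon
        omega
      obtain ⟨f, hfF, hfe'⟩ := hfe
      have hfG : f ∈ G := by rw [hGF]; exact hfF
      have hfT := hG1 hfG
      rcases Finset.mem_insert.mp hfT with hc | hc
      · exact hwiF (hc ▸ hfF)
      · rcases Finset.mem_insert.mp hc with hc' | hc'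
        · exact hwsF (hc' ▸ hfF)
        · exact hfe' hc'
    · apply Finset.insert_subset (hwΩ i hi)
      apply Finset.insert_subset (hwΩ istar histar)
      exact heF.trans hFvΩ
  -- every member of L is a proper small cycle in C − F
  have hLprop : ∀ Z ∈ L, IsCycle d Z ∧ Z ⊆ C.erase F ∧ vertexSet Z ⊂ vertexSet Ω := by
    intro Z hZ
    rw [hLdef] at hZ
    obtain ⟨i, -, hZR⟩ := List.mem_flatMap.mp hZ
    by_cases hi : F ∈ Ωs0 i
    · simp only [hRdef, hi, if_true] at hZR
      rcases List.mem_append.mp hZR with hZc | hZe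
      · rw [Finset.mem_toList] at hZc
        obtain ⟨A, hA, rfl⟩ := Finset.mem_image.mp hZc
        refine ⟨comp_isCycle (hgood i hi) hA, comp_subset.trans (hXC i hi), ?_⟩
        have h1 : vertexSet (comp d (X i) A) ⊆ vertexSet (Ωs0 i) :=
          (vertexSet_mono comp_subset).trans (hXvert i hi)
        exact subset_ssubset_trans h1 (hvss i)
      · by_cases hwi : w i = w istar
        · simp only [hELdef, hwi, if_true] at hZe
          exact absurd hZe (List.not_mem_nil)
        · simp only [hELdef, hwi, if_false] at hZe
          obtain ⟨e, he, rfl⟩ := List.mem_map.mp hZe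
          rw [Finset.mem_toList] at he
          obtain ⟨hTcard, hTsub, hTvert⟩ := hbdry i hi hwi e he
          refine ⟨bdry_isCycle hTcard, hTsub, ?_⟩
          have h1 : vertexSet ((insert (w i) (insert (w istar) e)).powersetCard (d + 1))
              ⊆ insert (w i) (insert (w istar) e) := by
            intro v hv
            obtain ⟨G, hG, hvG⟩ := mem_vertexSet_iff.mp hv
            exact (Finset.mem_powersetCard.mp hG).1 hvG
          rw [Finset.ssubset_iff_subset_ne]
          refine ⟨h1.trans hTvert, fun heq => ?_⟩
          have h2 := Finset.card_le_card h1
          rw [heq, hTcard] at h2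
          omega
    · simp only [hRdef, hi, if_false] at hZR
      rcases List.mem_cons.mp hZR with rfl | hc
      · refine ⟨(hprop i).1, ?_, hvss i⟩
        rw [Finset.subset_erase]
        exact ⟨(hprop i).2, hi⟩
      · exact absurd hc (List.not_mem_nil)
  -- parity
  have hparity : ∀ G : Finset α,
      cntL L G % 2 = (Finset.univ.filter fun i => G ∈ Ωs0 i).card % 2 := by
    intro G
    have hstep : cntL L G = ∑ i : Fin k0, cntL (R i) G := by
      rw [hLdef, cntL_flatMap, ← List.ofFn_eq_map (f := fun i => cntL (R i) G),
        List.sum_ofFn]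
    have hper : ∀ i : Fin k0, cntL (R i) G % 2
        = ((if G ∈ Ωs0 i then 1 else 0)
          + (if F ∈ Ωs0 i then (if G ∈ SS (w istar) then 1 else 0) else 0)) % 2 := by
      intro i
      have hXmem : G ∈ X i ↔
          ((G ∈ Ωs0 i ∧ G ∉ SS (w i)) ∨ (G ∈ SS (w i) ∧ G ∉ Ωs0 i)) := by
        simp only [hXdef, Finset.mem_union, Finset.mem_sdiff]
      by_cases hi : F ∈ Ωs0 i
      · simp only [hRdef, hi, if_true]
        rw [cntL_append, cntL_toList, comps_card d (X i) G]
        by_cases hwi : w i = w istar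
        · simp only [hELdef, hwi, if_true, cntL_nil]
          rw [hwi] at hXmem
          by_cases ha : G ∈ Ωs0 i <;> by_cases hb : G ∈ SS (w istar) <;>
            · simp only [hXmem, ha, hb, not_true_eq_false, not_false_eq_true,
                and_true, and_false, true_and, false_and, or_false, false_or,
                if_true, if_false, iff_true, iff_false]
              try omega
        · simp only [hELdef, hwi, if_false]
          have hEcnt : cntL ((F.powersetCard d).toList.map
                fun e => (insert (w i) (insert (w istar) e)).powersetCard (d + 1)) G
              = ((F.powersetCard d).filter fun e =>
                  G ∈ (insert (w i) (insert (w istar) e)).powersetCard (d + 1)).card := by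
            simp only [cntL, List.map_map]
            rw [Finset.sum_map_toList, Finset.card_filter]
            rfl
          rw [hEcnt]
          have hP : ((F.powersetCard d).filter fun e =>
                  G ∈ (insert (w i) (insert (w istar) e)).powersetCard (d + 1)).card % 2
              = ((if G ∈ SS (w i) then 1 else 0)
                + (if G ∈ SS (w istar) then 1 else 0)) % 2 := by
            simp only [hSSdef]
            exact parityE hFc hwi (hw i hi).2.1 (hw istar histar).2.1 G
          by_cases ha : G ∈ Ωs0 i <;> by_cases hb : G ∈ SS (w i) <;>
            by_cases hc : G ∈ SS (w istar) <;>
            · simp only [ha, hb, hc, not_true_eq_false, not_false_eq_true,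
                and_true, and_false, true_and, false_and, or_false, false_or,
                if_true, if_false, iff_true, iff_false] at hP ⊢
              simp only [hXmem, ha, hb, not_true_eq_false, not_false_eq_true,
                and_true, and_false, true_and, false_and, or_false, false_or,
                if_true, if_false]
              omega
      · simp only [hRdef, hi, if_false, cntL_cons, cntL_nil]
    rw [hstep, Finset.sum_nat_mod]
    have hsum2 : (∑ i : Fin k0, cntL (R i) G % 2)
        = ∑ i : Fin k0, ((if G ∈ Ωs0 i then 1 else 0)
            + (if F ∈ Ωs0 i then (if G ∈ SS (w istar) then 1 else 0) else 0)) % 2 :=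
      Finset.sum_congr rfl fun i _ => hper i
    rw [hsum2, ← Finset.sum_nat_mod, Finset.sum_add_distrib]
    have h1 : (∑ i : Fin k0, if G ∈ Ωs0 i then 1 else 0)
        = (Finset.univ.filter fun i => G ∈ Ωs0 i).card :=
      (Finset.card_filter _ _).symm
    have h2 : (∑ i : Fin k0, if F ∈ Ωs0 i then (if G ∈ SS (w istar) then 1 else 0) else 0)
        = (Finset.univ.filter fun i => F ∈ Ωs0 i).card
          * (if G ∈ SS (w istar) then 1 else 0) := by
      rw [← Finset.sum_filter, Finset.sum_const, smul_eq_mul]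
    rw [h1, h2]
    have hIeven : Even ((Finset.univ.filter fun i => F ∈ Ωs0 i).card) :=
      heven F ⟨istar, histar⟩ hFΩ
    rw [Nat.even_iff] at hIeven
    by_cases ht : G ∈ SS (w istar)
    · rw [if_pos ht, Nat.mul_one]
      omega
    · rw [if_neg ht, Nat.mul_zero, Nat.add_zero]
  -- assemble
  obtain ⟨G0, hG0⟩ := hΩmin.1.1
  have hoddΩ : ∀ G ∈ Ω, cntL L G % 2 = 1 := by
    intro G hG
    rw [hparity G]
    exact Nat.odd_iff.mp (hodd G hG)
  have hlen0 : L.length ≠ 0 := by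
    intro hc
    have hnil := List.length_eq_zero_iff.mp hc
    have := hoddΩ G0 hG0
    rw [hnil] at this
    simp only [cntL_nil] at this
    omega
  have hlen1 : L.length ≠ 1 := by
    intro h1
    obtain ⟨Z, hZeq⟩ := List.length_eq_one_iff.mp h1
    have hZL : Z ∈ L := by
      rw [hZeq]
      exact List.mem_cons_self
    have hΩZ : Ω ⊆ Z := by
      intro G hG
      have hodd' := hoddΩ G hG
      rw [hZeq] at hodd'
      simp only [cntL_cons, cntL_nil] at hodd'
      by_contra hGZ
      rw [if_neg hGZ] at hodd'
      omega
    have h3 := (hLprop Z hZL).2.2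
    have h4 := Finset.card_le_card (vertexSet_mono hΩZ)
    have h5 := Finset.card_lt_card h3
    omega
  refine ⟨L.length, fun j => L.get j, by omega, ?_, ?_, ?_, ?_, ?_⟩
  · intro j
    have hj := hLprop (L.get j) (List.get_mem L j)
    exact ⟨hj.1, hj.2.1⟩
  · intro G hG
    by_contra hcon
    push_neg at hcon
    have hfe : (Finset.univ.filter fun j : Fin L.length => G ∈ L.get j) = ∅ :=
      Finset.filter_eq_empty_iff.mpr fun j _ => hcon j
    have hcg := card_univ_get L G
    rw [hfe] at hcg
    simp only [Finset.card_empty] at hcg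
    have hodd' := hoddΩ G hG
    rw [← hcg] at hodd'
    omega
  · intro G hG
    rw [Nat.odd_iff]
    show (Finset.univ.filter fun j : Fin L.length => G ∈ L.get j).card % 2 = 1
    rw [card_univ_get L G]
    exact hoddΩ G hG
  · intro G _ hGΩ
    rw [Nat.even_iff]
    show (Finset.univ.filter fun j : Fin L.length => G ∈ L.get j).card % 2 = 0
    rw [card_univ_get L G, hparity G]
    by_cases hex0 : ∃ i, G ∈ Ωs0 i
    · exact Nat.even_iff.mp (heven G hex0 hGΩ)
    · have hfe : (Finset.univ.filter fun i : Fin k0 => G ∈ Ωs0 i) = ∅ :=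
        Finset.filter_eq_empty_iff.mpr fun i _ hc => hex0 ⟨i, hc⟩
      rw [hfe]
      simp
  · intro j
    exact (hLprop (L.get j) (List.get_mem L j)).2.2

end ClutterPaper
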